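/- (Controlled classicalisation theorem) Let A = ((a_n, r_n)) be a redundancy-free abstract Swiss cheese with ρ(A) < ∞, let I be a nonempty subset of ℕ, and suppose ((K_n, M_n))_{n ∈ I} is an admissible collection of pairs with respect to A whose compact sets cover the error set of A, i.e. E(A) ⊆ ⋃_{n ∈ I} K_n. Then there exists a classical abstract Swiss cheese B = ((b_n, s_n)) with δ_1(B) ≥ δ_1(A) and X_B ⊆ X_A such that: (1) for every k ∈ S_A ∖ ⋃_{n ∈ I} H_A(U_n) there exists ℓ ∈ S_B with ball(b_ℓ, s_ℓ) = ball(a_k, r_k); and (2) ρ_{U_n}(B) ≤ ρ_{U_n}(A) for all n ∈ I. -/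

import Mathlib

open Metric Set

/-- An abstract Swiss cheese: a sequence `((a_n, r_n))_{n ≥ 0}` of centres `a n ∈ ℂ` and
non-negative radii `r n ∈ [0, ∞)`. -/
structure SwissCheese where
  a : ℕ → ℂ
  r : ℕ → ℝ
  r_nonneg : ∀ n, 0 ≤ r n

namespace SwissCheese

/-- The associated Swiss cheese set `X_A = closedBall(a₀, r₀) ∖ ⋃_{n ≥ 1} ball(a_n, r_n)`. -/
def cheeseSet (A : SwissCheese) : Set ℂ :=
  closedBall (A.a 0) (A.r 0) \ ⋃ n ∈ Set.Ici 1, ball (A.a n) (A.r n)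

/-- The significant index set `S_A = {n ≥ 1 : r_n > 0}`. -/
def sig (A : SwissCheese) : Set ℕ := {n | 1 ≤ n ∧ 0 < A.r n}

/-- The radius sum `ρ(A) = ∑_{n ≥ 1} r_n` is finite. -/
def RadSummable (A : SwissCheese) : Prop := Summable fun n => A.r (n + 1)

/-- The radius sum `ρ(A) = ∑_{n ≥ 1} r_n`. -/
noncomputable def radSum (A : SwissCheese) : ℝ := ∑' n, A.r (n + 1)

/-- The discrepancy `δ₁(A) = r₀ − ∑_{n ≥ 1} r_n`. -/
noncomputable def disc (A : SwissCheese) : ℝ := A.r 0 - A.radSum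

/-- `A` is classical: `ρ(A) < ∞`, `r₀ > 0`, each significant closed disk is contained in
`ball(a₀, r₀)`, and distinct significant closed disks are disjoint. -/
def IsClassical (A : SwissCheese) : Prop :=
  A.RadSummable ∧ 0 < A.r 0 ∧ ∀ k ∈ A.sig,
    closedBall (A.a k) (A.r k) ⊆ ball (A.a 0) (A.r 0) ∧
    ∀ l ∈ A.sig, l ≠ k → closedBall (A.a k) (A.r k) ∩ closedBall (A.a l) (A.r l) = ∅

/-- `A` is semiclassical: `ρ(A) < ∞`, `r₀ > 0`, each significant open disk is contained in
`ball(a₀, r₀)`, and distinct significant open disks are disjoint. -/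
def IsSemiclassical (A : SwissCheese) : Prop :=
  A.RadSummable ∧ 0 < A.r 0 ∧ ∀ k ∈ A.sig,
    ball (A.a k) (A.r k) ⊆ ball (A.a 0) (A.r 0) ∧
    ∀ l ∈ A.sig, l ≠ k → ball (A.a k) (A.r k) ∩ ball (A.a l) (A.r l) = ∅

/-- `A` is annular: `a₀ = a₁` and `r₀ > r₁ > 0`. -/
def IsAnnular (A : SwissCheese) : Prop := A.a 0 = A.a 1 ∧ A.r 1 < A.r 0 ∧ 0 < A.r 1

/-- The annular radius sum `ρ_ann(A) = ∑_{n ≥ 2} r_n`. -/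
noncomputable def annRadSum (A : SwissCheese) : ℝ := ∑' n, A.r (n + 2)

/-- The annular discrepancy `δ_ann(A) = r₀ − r₁ − 2 ∑_{n ≥ 2} r_n`. -/
noncomputable def annDisc (A : SwissCheese) : ℝ := A.r 0 - A.r 1 - 2 * A.annRadSum

/-- `A` is redundancy-free: every significant open disk meets `closedBall(a₀, r₀)`, and no
significant open disk is contained in another one. -/
def IsRedundancyFree (A : SwissCheese) : Prop :=
  ∀ k ∈ A.sig, (ball (A.a k) (A.r k) ∩ closedBall (A.a 0) (A.r 0)).Nonempty ∧
    ∀ l ∈ A.sig, l ≠ k → ¬ ball (A.a k) (A.r k) ⊆ ball (A.a l) (A.r l)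

/-- `H_A(U)`: the set of significant indices whose closed disk meets `U`. -/
def HSet (A : SwissCheese) (U : Set ℂ) : Set ℕ :=
  {n | n ∈ A.sig ∧ (closedBall (A.a n) (A.r n) ∩ U).Nonempty}

/-- `ρ_U(A) = ∑_{n ∈ H_A(U)} r_n`. -/
noncomputable def rhoU (A : SwissCheese) (U : Set ℂ) : ℝ := ∑' n : A.HSet U, A.r n

/-- The error set `E(A)`. -/
def errorSet (A : SwissCheese) : Set ℂ :=
  (⋃ m ∈ A.sig, ⋃ n ∈ A.sig, ⋃ _ : m ≠ n,
      closedBall (A.a m) (A.r m) ∩ closedBall (A.a n) (A.r n)) ∪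
    ⋃ n ∈ A.sig, (ball (A.a 0) (A.r 0))ᶜ ∩ closedBall (A.a n) (A.r n)

/-- A Swiss cheese set is compact. -/
instance (A : SwissCheese) : CompactSpace A.cheeseSet :=
  isCompact_iff_compactSpace.mp
    ((isCompact_closedBall _ _).diff (isOpen_biUnion fun _ _ => isOpen_ball))

end SwissCheese

/-- `U(K, M) = {z : dist(z, K) < M}`. -/
def UKM (K : Set ℂ) (M : ℝ) : Set ℂ := {z | Metric.infDist z K < M}

-- ===================== auxiliary development =====================
noncomputable section CCaux
open scoped ENNReal Classical

namespace CCaux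

lemma dist_add_le_of_cb_subset {a b : ℂ} {r s : ℝ} (hr : 0 ≤ r)
    (h : closedBall a r ⊆ closedBall b s) : dist a b + r ≤ s := by
  rcases eq_or_ne a b with rfl | hab
  · have hu : (a + (r:ℂ)) ∈ closedBall a r := by
      simp [mem_closedBall, dist_eq_norm, abs_of_nonneg hr]
    have := h hu
    simp only [mem_closedBall, dist_eq_norm, add_sub_cancel_left, Complex.norm_real,
      Real.norm_eq_abs] at this
    rw [abs_of_nonneg hr] at this
    simpa using this
  · set d := dist a b with hd
    have hd0 : 0 < d := dist_pos.mpr hab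
    set u : ℂ := a + (r / d) • (a - b) with hu
    have h1 : dist u a = r := by
      rw [dist_eq_norm, hu]
      simp only [add_sub_cancel_left, norm_smul, Real.norm_eq_abs]
      rw [abs_of_nonneg (by positivity), ← dist_eq_norm, ← hd]
      field_simp
    have h2 : u ∈ closedBall b s := h (mem_closedBall.mpr h1.le)
    have h3 : dist u b = d + r := by
      rw [dist_eq_norm, hu]
      have e : a + (r / d) • (a - b) - b = (1 + r / d) • (a - b) := by module
      rw [e, norm_smul, Real.norm_eq_abs, abs_of_nonneg (by positivity), ← dist_eq_norm, ← hd]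
      field_simp
    rw [mem_closedBall, h3] at h2
    linarith

lemma hull₂ {a b : ℂ} {r s : ℝ} (hr : 0 ≤ r) (hs : 0 ≤ s) (hd : dist a b ≤ r + s) :
    ∃ c t, 0 ≤ t ∧ t ≤ r + s ∧ closedBall a r ⊆ closedBall c t ∧
      closedBall b s ⊆ closedBall c t := by
  set d := dist a b with hdd
  have hd0 : 0 ≤ d := dist_nonneg
  by_cases h1 : d + r ≤ s
  · exact ⟨b, s, hs, by linarith, closedBall_subset_closedBall' (by rw [← hdd]; linarith),
      subset_rfl⟩
  by_cases h2 : d + s ≤ r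
  · exact ⟨a, r, hr, by linarith, subset_rfl,
      closedBall_subset_closedBall' (by rw [dist_comm, ← hdd]; linarith)⟩
  push_neg at h1 h2
  have hab : a ≠ b := by
    intro h; rw [h] at hdd; simp at hdd; rw [hdd] at h1 h2
    rcases le_total r s with h'|h' <;> linarith
  have hd0' : 0 < d := dist_pos.mpr hab
  set t : ℝ := (r + s + d) / 2 with ht
  set c : ℂ := a + ((t - r) / d) • (b - a) with hc
  have htr0 : 0 ≤ t - r := by rw [ht]; linarith
  have hts0 : 0 ≤ t - s := by rw [ht]; linarith
  have hac : dist a c = t - r := by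
    rw [dist_eq_norm, hc]
    have e : a - (a + ((t - r) / d) • (b - a)) = ((t - r) / d) • (a - b) := by module
    rw [e, norm_smul, Real.norm_eq_abs, abs_of_nonneg (by positivity), ← dist_eq_norm, ← hdd]
    field_simp
  have hbc : dist b c = t - s := by
    rw [dist_eq_norm, hc]
    have e : b - (a + ((t - r) / d) • (b - a)) = ((d - (t - r)) / d) • (b - a) := by
      have : ((d - (t - r)) / d) = 1 - (t - r)/d := by field_simp
      rw [this]; module
    have hnn : 0 ≤ d - (t - r) := by rw [ht]; linarith
    rw [e, norm_smul, Real.norm_eq_abs, abs_of_nonneg (by positivity), ← dist_eq_norm,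
      dist_comm b a, ← hdd]
    rw [div_mul_cancel₀ _ (ne_of_gt hd0')]
    rw [ht]; ring
  refine ⟨c, t, by linarith, by rw [ht]; linarith, ?_, ?_⟩
  · exact closedBall_subset_closedBall' (by rw [hac]; linarith)
  · exact closedBall_subset_closedBall' (by rw [hbc]; linarith)

lemma ballSubBall {a b : ℂ} {r s : ℝ} (hr : 0 < r)
    (h : closedBall a r ⊆ closedBall b s) : ball a r ⊆ ball b s :=
  ball_subset_ball' (by have := dist_add_le_of_cb_subset hr.le h; linarith)

variable (A : SwissCheese) (I : Set ℕ) (K : ℕ → Set ℂ) (M : ℕ → ℝ)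

/-- `ofReal` of the radii. -/
def uu : ℕ → ℝ≥0∞ := fun k => ENNReal.ofReal (A.r k)

/-- All the hypotheses of the controlled classicalisation theorem. -/
structure Hyp : Prop where
  hsum : A.RadSummable
  hI : I.Nonempty
  hKne : ∀ n ∈ I, (K n).Nonempty
  hM : ∀ n ∈ I, 0 < M n
  hadm₁ : ∀ n ∈ I, A.rhoU (UKM (K n) (M n)) < M n / 2
  hadm₂ : ∀ m ∈ I, ∀ n ∈ I, m ≠ n → UKM (K m) (M m) ∩ UKM (K n) (M n) = ∅
  hadm₃ : ∀ n ∈ I, closure (UKM (K n) (M n)) ⊆ Metric.ball (A.a 0) (A.r 0)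
  hcover : A.errorSet ⊆ ⋃ n ∈ I, K n

/-- A state of the transfinite merging process. -/
structure St where
  f : ℕ → ℕ
  c : ℕ → ℂ
  t : ℕ → ℝ
  mem : ∀ k ∈ A.sig, f k ∈ A.sig
  idem : ∀ k ∈ A.sig, f (f k) = f k
  sub : ∀ k ∈ A.sig, closedBall (A.a k) (A.r k) ⊆ closedBall (c (f k)) (t (f k))
  bound : ∀ j ∈ A.sig, f j = j →
    ENNReal.ofReal (t j) ≤ ∑' k : {k | k ∈ A.sig ∧ f k = j}, ENNReal.ofReal (A.r k)
  tag : ∀ j ∈ A.sig, f j = j →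
    ({k | k ∈ A.sig ∧ f k = j} = {j} ∧ c j = A.a j ∧ t j = A.r j) ∨
    ∃ n ∈ I, (closedBall (c j) (t j) ∩ K n).Nonempty ∧
      {k | k ∈ A.sig ∧ f k = j} ⊆ A.HSet (UKM (K n) (M n))

variable {A I K M}

instance : Preorder (St A I K M) where
  le σ τ := (∀ k ∈ A.sig, ∀ l ∈ A.sig, σ.f k = σ.f l → τ.f k = τ.f l) ∧
    ∀ k ∈ A.sig,
      closedBall (σ.c (σ.f k)) (σ.t (σ.f k)) ⊆ closedBall (τ.c (τ.f k)) (τ.t (τ.f k))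
  le_refl σ := ⟨fun k _ l _ h => h, fun k _ => subset_rfl⟩
  le_trans σ τ υ h h' := ⟨fun k hk l hl hh => h'.1 k hk l hl (h.1 k hk l hl hh),
    fun k hk => (h.2 k hk).trans (h'.2 k hk)⟩

lemma le_def {σ τ : St A I K M} : σ ≤ τ ↔
    (∀ k ∈ A.sig, ∀ l ∈ A.sig, σ.f k = σ.f l → τ.f k = τ.f l) ∧
    ∀ k ∈ A.sig,
      closedBall (σ.c (σ.f k)) (σ.t (σ.f k)) ⊆ closedBall (τ.c (τ.f k)) (τ.t (τ.f k)) :=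
  Iff.rfl

lemma t_nonneg (σ : St A I K M) {j : ℕ} (hj : j ∈ A.sig) : A.r j ≤ σ.t (σ.f j) := by
  have := dist_add_le_of_cb_subset (A.r_nonneg j) (σ.sub j hj)
  have h0 := dist_nonneg (x := A.a j) (y := σ.c (σ.f j))
  linarith

lemma t_nonneg' (σ : St A I K M) {j : ℕ} (hj : j ∈ A.sig) : 0 ≤ σ.t (σ.f j) :=
  le_trans (A.r_nonneg j) (t_nonneg σ hj)

lemma t_nonneg'' (σ : St A I K M) {j : ℕ} (hj : j ∈ A.sig) (hr : σ.f j = j) : 0 ≤ σ.t j := by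
  have := t_nonneg' σ hj; rwa [hr] at this

lemma le_t_mono {σ τ : St A I K M} (h : σ ≤ τ) {j : ℕ} (hj : j ∈ A.sig) :
    σ.t (σ.f j) ≤ τ.t (τ.f j) := by
  have := dist_add_le_of_cb_subset (t_nonneg' σ hj) (h.2 j hj)
  have h0 := dist_nonneg (x := σ.c (σ.f j)) (y := τ.c (τ.f j))
  linarith

lemma le_dist {σ τ : St A I K M} (h : σ ≤ τ) {j : ℕ} (hj : j ∈ A.sig) :
    dist (σ.c (σ.f j)) (τ.c (τ.f j)) + σ.t (σ.f j) ≤ τ.t (τ.f j) :=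
  dist_add_le_of_cb_subset (t_nonneg' σ hj) (h.2 j hj)

-- ================= derived facts from the hypotheses =================

lemma summable_r (h : Hyp A I K M) : Summable A.r := (summable_nat_add_iff 1).mp h.hsum

lemma tsum_uu_ne_top (h : Hyp A I K M) (s : Set ℕ) : ∑' k : s, uu A k ≠ ⊤ := by
  have h1 : ∑' k : s, uu A k ≤ ∑' k, uu A k :=
    ENNReal.tsum_comp_le_tsum_of_injective Subtype.coe_injective (uu A)
  have h2 : ∑' k, uu A k = ENNReal.ofReal (∑' k, A.r k) :=
    (ENNReal.ofReal_tsum_of_nonneg A.r_nonneg (summable_r h)).symm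
  exact ne_top_of_le_ne_top (by rw [h2]; exact ENNReal.ofReal_ne_top) h1

lemma mem_UKM {z : ℂ} {Kn : Set ℂ} {Mn : ℝ} : z ∈ UKM Kn Mn ↔ Metric.infDist z Kn < Mn :=
  Iff.rfl

lemma KsubU (h : Hyp A I K M) {n : ℕ} (hn : n ∈ I) : K n ⊆ UKM (K n) (M n) := fun z hz =>
  mem_UKM.mpr (by rw [Metric.infDist_zero_of_mem hz]; exact h.hM n hn)

lemma UsubBall (h : Hyp A I K M) {n : ℕ} (hn : n ∈ I) :
    UKM (K n) (M n) ⊆ ball (A.a 0) (A.r 0) :=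
  subset_closure.trans (h.hadm₃ n hn)

lemma holeSubBall (h : Hyp A I K M) {k : ℕ} (hk : k ∈ A.sig) :
    closedBall (A.a k) (A.r k) ⊆ ball (A.a 0) (A.r 0) := by
  intro x hx
  by_contra hxb
  have hxe : x ∈ A.errorSet := by
    refine Or.inr ?_
    exact mem_biUnion hk ⟨hxb, hx⟩
  obtain ⟨n, hn, hKn⟩ := by simpa using h.hcover hxe
  exact hxb (UsubBall h hn (KsubU h hn hKn))

lemma meetK (h : Hyp A I K M) {k l : ℕ} {z : ℂ} (hk : k ∈ A.sig) (hl : l ∈ A.sig)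
    (hkl : k ≠ l) (hz : z ∈ closedBall (A.a k) (A.r k) ∩ closedBall (A.a l) (A.r l)) :
    ∃ n ∈ I, z ∈ K n := by
  have hxe : z ∈ A.errorSet := by
    refine Or.inl ?_
    refine mem_biUnion hk ?_
    refine mem_biUnion hl ?_
    exact mem_iUnion.mpr ⟨hkl, hz⟩
  simpa using h.hcover hxe

lemma rhoU_nonneg (h : Hyp A I K M) (U : Set ℂ) : 0 ≤ A.rhoU U :=
  tsum_nonneg fun k => A.r_nonneg k

lemma rho_ofReal (h : Hyp A I K M) (U : Set ℂ) :
    ENNReal.ofReal (A.rhoU U) = ∑' k : A.HSet U, uu A k :=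
  ENNReal.ofReal_tsum_of_nonneg (fun k => A.r_nonneg k) ((summable_r h).subtype _)

lemma diskSubU (h : Hyp A I K M) {n : ℕ} (hn : n ∈ I) {c : ℂ} {t : ℝ} (ht : 0 ≤ t)
    (hb : ENNReal.ofReal t ≤ ∑' k : A.HSet (UKM (K n) (M n)), uu A k)
    (hne : (closedBall c t ∩ K n).Nonempty) : closedBall c t ⊆ UKM (K n) (M n) := by
  rw [← rho_ofReal h] at hb
  have htρ : t ≤ A.rhoU (UKM (K n) (M n)) :=
    (ENNReal.ofReal_le_ofReal_iff (rhoU_nonneg h _)).mp hb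
  obtain ⟨z, hz1, hz2⟩ := hne
  intro w hw
  rw [mem_UKM]
  calc Metric.infDist w (K n) ≤ dist w z := Metric.infDist_le_dist_of_mem hz2
    _ ≤ dist w c + dist c z := dist_triangle _ _ _
    _ ≤ t + t := add_le_add (mem_closedBall.mp hw) (by
        rw [dist_comm]; exact mem_closedBall.mp hz1)
    _ < M n := by have := h.hadm₁ n hn; linarith

lemma sumFib (h : Hyp A I K M) (σ : St A I K M) (W' W : Set ℕ)
    (hW' : ∀ j ∈ W', j ∈ A.sig ∧ σ.f j = j)
    (hW : ∀ j ∈ W', ∀ k, k ∈ A.sig → σ.f k = j → k ∈ W) :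
    ∑' j : W', ENNReal.ofReal (σ.t j) ≤ ∑' k : W, uu A k := by
  have step1 : ∑' j : W', ENNReal.ofReal (σ.t j) ≤
      ∑' j : W', ∑' k : {k | k ∈ A.sig ∧ σ.f k = j.1}, uu A k :=
    ENNReal.tsum_le_tsum fun j => σ.bound j.1 (hW' j.1 j.2).1 (hW' j.1 j.2).2
  refine step1.trans ?_
  rw [← ENNReal.tsum_sigma' (fun p : (Σ j : W', {k | k ∈ A.sig ∧ σ.f k = j.1}) => uu A p.2.1)]
  have hinj : Function.Injective
      (fun p : (Σ j : W', {k | k ∈ A.sig ∧ σ.f k = j.1}) =>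
        (⟨p.2.1, hW p.1.1 p.1.2 p.2.1 p.2.2.1 p.2.2.2⟩ : W)) := by
    rintro ⟨⟨j, hj⟩, ⟨k, hk⟩⟩ ⟨⟨j', hj'⟩, ⟨k', hk'⟩⟩ hpq
    simp only [Subtype.mk.injEq] at hpq
    have h1 : σ.f k = j := hk.2
    have h2 : σ.f k' = j' := hk'.2
    have hjj' : j = j' := by rw [← h1, ← h2, hpq]
    subst hjj'; subst hpq
    rfl
  exact ENNReal.tsum_comp_le_tsum_of_injective hinj (fun k : W => uu A k.1)

-- ================= initial state =================

def init : St A I K M where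
  f := id
  c := A.a
  t := A.r
  mem := fun k hk => hk
  idem := fun k _ => rfl
  sub := fun k _ => subset_rfl
  bound := fun j hj _ => by
    have hset : {k | k ∈ A.sig ∧ id k = j} = ({j} : Set ℕ) := by
      ext k; simp only [mem_setOf_eq, id_eq, mem_singleton_iff]
      exact ⟨fun hk => hk.2, fun hk => ⟨hk ▸ hj, hk⟩⟩
    rw [hset]
    exact le_of_eq (tsum_singleton j fun k => ENNReal.ofReal (A.r k)).symm
  tag := fun j hj _ => by
    refine Or.inl ⟨?_, rfl, rfl⟩
    ext k; simp only [mem_setOf_eq, id_eq, mem_singleton_iff]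
    exact ⟨fun hk => hk.2, fun hk => ⟨hk ▸ hj, hk⟩⟩

instance : Nonempty (St A I K M) := ⟨init⟩

-- ================= the merge step =================

lemma fib_subset_HSet (h : Hyp A I K M) (σ : St A I K M) {j : ℕ} (hj : j ∈ A.sig)
    (hrep : σ.f j = j) {n : ℕ} (hn : n ∈ I)
    (htag : (closedBall (σ.c j) (σ.t j) ∩ K n).Nonempty ∧
      {k | k ∈ A.sig ∧ σ.f k = j} ⊆ A.HSet (UKM (K n) (M n))) :
    closedBall (σ.c j) (σ.t j) ⊆ UKM (K n) (M n) := by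
  refine diskSubU h hn (t_nonneg'' σ hj hrep) ?_ htag.1
  calc ENNReal.ofReal (σ.t j) ≤ ∑' k : {k | k ∈ A.sig ∧ σ.f k = j}, uu A k :=
        σ.bound j hj hrep
    _ ≤ ∑' k : A.HSet (UKM (K n) (M n)), uu A k := ENNReal.tsum_mono_subtype _ htag.2

lemma merge (h : Hyp A I K M) (σ : St A I K M) {j j' : ℕ} (hj : j ∈ A.sig) (hj' : j' ∈ A.sig)
    (hrj : σ.f j = j) (hrj' : σ.f j' = j') (hjj : j ≠ j')
    (hint : (closedBall (σ.c j) (σ.t j) ∩ closedBall (σ.c j') (σ.t j')).Nonempty) :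
    ∃ τ : St A I K M, σ ≤ τ ∧ ¬ τ ≤ σ := by
  obtain ⟨z, hz, hz'⟩ := hint
  have htj : 0 ≤ σ.t j := t_nonneg'' σ hj hrj
  have htj' : 0 ≤ σ.t j' := t_nonneg'' σ hj' hrj'
  have hdist : dist (σ.c j) (σ.c j') ≤ σ.t j + σ.t j' := by
    calc dist (σ.c j) (σ.c j') ≤ dist (σ.c j) z + dist z (σ.c j') := dist_triangle _ _ _
      _ ≤ σ.t j + σ.t j' := add_le_add (by rw [dist_comm]; exact mem_closedBall.mp hz)
          (mem_closedBall.mp hz')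
  obtain ⟨c₀, t₀, ht₀, ht₀le, hsub₁, hsub₂⟩ := hull₂ htj htj' hdist
  -- the new fibre of j is the union of the two old fibres
  have fibne : ∀ i : ℕ, i ∈ A.sig → σ.f i = i → i ∈ {k | k ∈ A.sig ∧ σ.f k = i} :=
    fun i hi hri => ⟨hi, hri⟩
  -- tag data for the merged disk
  have tagBoth : ∃ n ∈ I, (closedBall c₀ t₀ ∩ K n).Nonempty ∧
      ({k | k ∈ A.sig ∧ σ.f k = j} ∪ {k | k ∈ A.sig ∧ σ.f k = j'}) ⊆
        A.HSet (UKM (K n) (M n)) := by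
    rcases σ.tag j hj hrj with hL | ⟨n, hn, hKn, hHn⟩
    · rcases σ.tag j' hj' hrj' with hL' | ⟨n', hn', hKn', hHn'⟩
      · -- both original : use the error set
        have hzj : z ∈ closedBall (A.a j) (A.r j) := by rw [← hL.2.1, ← hL.2.2]; exact hz
        have hzj' : z ∈ closedBall (A.a j') (A.r j') := by rw [← hL'.2.1, ← hL'.2.2]; exact hz'
        obtain ⟨n, hn, hzn⟩ := meetK h hj hj' hjj ⟨hzj, hzj'⟩
        refine ⟨n, hn, ⟨z, hsub₁ hz, hzn⟩, ?_⟩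
        rintro k (hk | hk)
        · rw [hL.1] at hk; rw [hk]
          exact ⟨hj, ⟨z, hzj, KsubU h hn hzn⟩⟩
        · rw [hL'.1] at hk; rw [hk]
          exact ⟨hj', ⟨z, hzj', KsubU h hn hzn⟩⟩
      · -- j original, j' merged
        have hU' := fib_subset_HSet h σ hj' hrj' hn' ⟨hKn', hHn'⟩
        refine ⟨n', hn', ⟨hKn'.choose, hsub₂ hKn'.choose_spec.1, hKn'.choose_spec.2⟩, ?_⟩
        rintro k (hk | hk)
        · rw [hL.1] at hk; rw [hk]
          refine ⟨hj, ⟨z, ?_, hU' hz'⟩⟩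
          rw [← hL.2.1, ← hL.2.2]; exact hz
        · exact hHn' hk
    · -- j merged
      have hU := fib_subset_HSet h σ hj hrj hn ⟨hKn, hHn⟩
      rcases σ.tag j' hj' hrj' with hL' | ⟨n', hn', hKn', hHn'⟩
      · refine ⟨n, hn, ⟨hKn.choose, hsub₁ hKn.choose_spec.1, hKn.choose_spec.2⟩, ?_⟩
        rintro k (hk | hk)
        · exact hHn hk
        · rw [hL'.1] at hk; rw [hk]
          refine ⟨hj', ⟨z, ?_, hU hz⟩⟩
          rw [← hL'.2.1, ← hL'.2.2]; exact hz'
      · -- both merged : the two neighbourhoods must coincide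
        have hU' := fib_subset_HSet h σ hj' hrj' hn' ⟨hKn', hHn'⟩
        have hnn' : n = n' := by
          by_contra hne
          have : z ∈ UKM (K n) (M n) ∩ UKM (K n') (M n') := ⟨hU hz, hU' hz'⟩
          rw [h.hadm₂ n hn n' hn' hne] at this
          exact this
        subst hnn'
        refine ⟨n, hn, ⟨hKn.choose, hsub₁ hKn.choose_spec.1, hKn.choose_spec.2⟩, ?_⟩
        rintro k (hk | hk)
        · exact hHn hk
        · exact hHn' hk
  obtain ⟨n₀, hn₀, hKn₀, hHn₀⟩ := tagBoth
  refine ⟨⟨fun k => if σ.f k = j' then j else σ.f k,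
           fun k => if k = j then c₀ else σ.c k,
           fun k => if k = j then t₀ else σ.t k, ?_, ?_, ?_, ?_, ?_⟩, ?_, ?_⟩
  -- mem
  · intro k hk
    by_cases h1 : σ.f k = j'
    · simp only [h1, if_pos]; exact hj
    · simp only [if_neg h1]; exact σ.mem k hk
  -- idem
  · intro k hk
    by_cases h1 : σ.f k = j'
    · simp [h1, hrj, hjj]
    · simp [h1, σ.idem k hk]
  -- sub
  · intro k hk
    by_cases h1 : σ.f k = j'
    · simp only [if_pos h1, if_pos]
      refine (σ.sub k hk).trans ?_
      rw [h1]; exact hsub₂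
    · simp only [if_neg h1]
      by_cases h2 : σ.f k = j
      · simp only [if_pos h2]
        refine (σ.sub k hk).trans ?_
        rw [h2]; exact hsub₁
      · simp only [if_neg h2]
        exact σ.sub k hk
  -- bound
  · intro i hi hrep
    by_cases h1 : i = j
    · subst h1
      simp only [if_pos rfl]
      have hset : {k | k ∈ A.sig ∧ (if σ.f k = j' then i else σ.f k) = i} =
          {k | k ∈ A.sig ∧ σ.f k = i} ∪ {k | k ∈ A.sig ∧ σ.f k = j'} := by
        ext k
        simp only [mem_setOf_eq, mem_union]
        constructor
        · rintro ⟨hks, hk⟩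
          by_cases hc : σ.f k = j'
          · exact Or.inr ⟨hks, hc⟩
          · rw [if_neg hc] at hk; exact Or.inl ⟨hks, hk⟩
        · rintro (⟨hks, hk⟩ | ⟨hks, hk⟩)
          · refine ⟨hks, ?_⟩
            rw [if_neg (by rw [hk]; exact fun hcc => hjj hcc), hk]
          · exact ⟨hks, by rw [if_pos hk]⟩
      rw [hset]
      have hdisj : Disjoint {k | k ∈ A.sig ∧ σ.f k = i} {k | k ∈ A.sig ∧ σ.f k = j'} := by
        rw [disjoint_left]
        rintro k ⟨_, hk1⟩ ⟨_, hk2⟩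
        exact hjj (hk1 ▸ hk2)
      rw [Summable.tsum_union_disjoint (f := fun k => ENNReal.ofReal (A.r k)) hdisj
        ENNReal.summable ENNReal.summable]
      calc ENNReal.ofReal t₀ ≤ ENNReal.ofReal (σ.t i + σ.t j') := ENNReal.ofReal_le_ofReal ht₀le
        _ ≤ ENNReal.ofReal (σ.t i) + ENNReal.ofReal (σ.t j') := ENNReal.ofReal_add_le
        _ ≤ _ := add_le_add (σ.bound i hj hrj) (σ.bound j' hj' hrj')
    · have h2 : σ.f i ≠ j' := by
        intro hc
        rw [if_pos hc] at hrep
        exact h1 hrep.symm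
      rw [if_neg h2] at hrep
      have hij' : i ≠ j' := by
        intro hc
        exact h2 (by rw [hc, hrj'])
      have hset : {k | k ∈ A.sig ∧ (if σ.f k = j' then j else σ.f k) = i} =
          {k | k ∈ A.sig ∧ σ.f k = i} := by
        ext k
        simp only [mem_setOf_eq]
        constructor
        · rintro ⟨hks, hk⟩
          by_cases hc : σ.f k = j'
          · rw [if_pos hc] at hk; exact absurd hk.symm h1
          · rw [if_neg hc] at hk; exact ⟨hks, hk⟩
        · rintro ⟨hks, hk⟩
          refine ⟨hks, ?_⟩
          rw [if_neg (by rw [hk]; exact fun hc => hij' hc), hk]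
      rw [if_neg h1, hset]
      exact σ.bound i hi hrep
  -- tag
  · intro i hi hrep
    by_cases h1 : i = j
    · subst h1
      refine Or.inr ⟨n₀, hn₀, ?_, ?_⟩
      · simpa only [if_pos rfl, if_true] using hKn₀
      · have hset : {k | k ∈ A.sig ∧ (if σ.f k = j' then i else σ.f k) = i} =
            {k | k ∈ A.sig ∧ σ.f k = i} ∪ {k | k ∈ A.sig ∧ σ.f k = j'} := by
          ext k
          simp only [mem_setOf_eq, mem_union]
          constructor
          · rintro ⟨hks, hk⟩
            by_cases hc : σ.f k = j'
            · exact Or.inr ⟨hks, hc⟩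
            · rw [if_neg hc] at hk; exact Or.inl ⟨hks, hk⟩
          · rintro (⟨hks, hk⟩ | ⟨hks, hk⟩)
            · refine ⟨hks, ?_⟩
              rw [if_neg (by rw [hk]; exact fun hcc => hjj hcc), hk]
            · exact ⟨hks, by rw [if_pos hk]⟩
        rw [hset]
        exact hHn₀
    · have h2 : σ.f i ≠ j' := by
        intro hc
        rw [if_pos hc] at hrep
        exact h1 hrep.symm
      rw [if_neg h2] at hrep
      have hij' : i ≠ j' := fun hc => h2 (by rw [hc, hrj'])
      have hset : {k | k ∈ A.sig ∧ (if σ.f k = j' then j else σ.f k) = i} =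
          {k | k ∈ A.sig ∧ σ.f k = i} := by
        ext k
        simp only [mem_setOf_eq]
        constructor
        · rintro ⟨hks, hk⟩
          by_cases hc : σ.f k = j'
          · rw [if_pos hc] at hk; exact absurd hk.symm h1
          · rw [if_neg hc] at hk; exact ⟨hks, hk⟩
        · rintro ⟨hks, hk⟩
          exact ⟨hks, by rw [if_neg (by rw [hk]; exact fun hc => hij' hc), hk]⟩
      rw [hset]
      simp only [if_neg h1]
      exact σ.tag i hi hrep
  -- σ ≤ τ
  · constructor
    · intro k hk l hl he
      dsimp only
      rw [he]
    · intro k hk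
      dsimp only
      by_cases h1 : σ.f k = j'
      · simp only [if_pos h1, if_pos]
        rw [h1]; exact hsub₂
      · simp only [if_neg h1]
        by_cases h2 : σ.f k = j
        · simp only [if_pos h2]
          rw [h2]; exact hsub₁
        · simp only [if_neg h2]
          exact subset_rfl
  -- ¬ τ ≤ σ
  · intro hle
    have he : (if σ.f j = j' then j else σ.f j) = (if σ.f j' = j' then j else σ.f j') := by
      rw [if_neg (by rw [hrj]; exact hjj), if_pos hrj', hrj]
    have := hle.1 j hj j' hj' he
    rw [hrj, hrj'] at this
    exact hjj this

-- ================= chain upper bounds =================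

lemma chain_bound (h : Hyp A I K M) (C : Set (St A I K M)) (hC : IsChain (· ≤ ·) C)
    (hne : C.Nonempty) : ∃ ub : St A I K M, ∀ σ ∈ C, σ ≤ ub := by
  classical
  -- the eventual equivalence relation
  set eqv : ℕ → ℕ → Prop := fun k l => ∃ σ ∈ C, σ.f k = σ.f l with heqv
  have heq_refl : ∀ k, eqv k k := fun k => ⟨hne.choose, hne.choose_spec, rfl⟩
  have heq_symm : ∀ {k l}, eqv k l → eqv l k := fun ⟨σ, hσ, he⟩ => ⟨σ, hσ, he.symm⟩
  have heq_trans : ∀ {k l m}, k ∈ A.sig → l ∈ A.sig → m ∈ A.sig →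
      eqv k l → eqv l m → eqv k m := by
    rintro k l m hk hl hm ⟨σ₁, hσ₁, he₁⟩ ⟨σ₂, hσ₂, he₂⟩
    rcases hC.total hσ₁ hσ₂ with hle | hle
    · exact ⟨σ₂, hσ₂, (hle.1 k hk l hl he₁).trans he₂⟩
    · exact ⟨σ₁, hσ₁, he₁.trans (hle.1 l hl m hm he₂)⟩
  set F : ℕ → ℕ := fun k => sInf {l | l ∈ A.sig ∧ eqv k l} with hF
  have hFmem : ∀ k ∈ A.sig, F k ∈ A.sig ∧ eqv k (F k) := by
    intro k hk
    exact Nat.sInf_mem (⟨k, hk, heq_refl k⟩ : {l | l ∈ A.sig ∧ eqv k l}.Nonempty)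
  have hFcongr : ∀ k ∈ A.sig, ∀ l ∈ A.sig, eqv k l → F k = F l := by
    intro k hk l hl he
    have : {m | m ∈ A.sig ∧ eqv k m} = {m | m ∈ A.sig ∧ eqv l m} := by
      ext m
      simp only [mem_setOf_eq, and_congr_right_iff]
      intro hm
      exact ⟨fun hkm => heq_trans hl hk hm (heq_symm he) hkm,
        fun hlm => heq_trans hk hl hm he hlm⟩
    simp only [hF, this]
  have hFF : ∀ k ∈ A.sig, F (F k) = F k := by
    intro k hk
    exact hFcongr (F k) (hFmem k hk).1 k hk (heq_symm (hFmem k hk).2)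
  -- the limit radii
  set tstar : ℕ → ℝ := fun j => sSup ((fun σ : St A I K M => σ.t (σ.f j)) '' C) with htstar
  have hSne : ∀ j, ((fun σ : St A I K M => σ.t (σ.f j)) '' C).Nonempty := fun j => hne.image _
  have hub : ∀ j ∈ A.sig, ∀ σ ∈ C, σ.t (σ.f j) ≤ (∑' k : A.sig, uu A k).toReal := by
    intro j hj σ hσ
    have h1 : ENNReal.ofReal (σ.t (σ.f j)) ≤ ∑' k : A.sig, uu A k := by
      refine (σ.bound (σ.f j) (σ.mem j hj) (σ.idem j hj)).trans ?_
      exact ENNReal.tsum_mono_subtype _ (fun k hk => hk.1)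
    calc σ.t (σ.f j) = (ENNReal.ofReal (σ.t (σ.f j))).toReal :=
          (ENNReal.toReal_ofReal (t_nonneg' σ hj)).symm
      _ ≤ _ := ENNReal.toReal_mono (tsum_uu_ne_top h _) h1
  have hbdd : ∀ j ∈ A.sig, BddAbove ((fun σ : St A I K M => σ.t (σ.f j)) '' C) := by
    intro j hj
    exact ⟨(∑' k : A.sig, uu A k).toReal, by
      rintro x ⟨σ, hσ, rfl⟩; exact hub j hj σ hσ⟩
  have htstar_le : ∀ j ∈ A.sig, ∀ σ ∈ C, σ.t (σ.f j) ≤ tstar j := by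
    intro j hj σ hσ
    exact le_csSup (hbdd j hj) ⟨σ, hσ, rfl⟩
  -- the limit centres
  have key : ∀ j, ∃ cj : ℂ, j ∈ A.sig →
      (∀ σ ∈ C, closedBall (σ.c (σ.f j)) (σ.t (σ.f j)) ⊆ closedBall cj (tstar j)) ∧
      ((∀ σ ∈ C, σ.c (σ.f j) = A.a j ∧ σ.t (σ.f j) = A.r j) → cj = A.a j) := by
    intro j
    by_cases hj : j ∈ A.sig
    swap
    · exact ⟨A.a j, fun hj' => absurd hj' hj⟩
    have happrox : ∀ m : ℕ, ∃ σ, σ ∈ C ∧ tstar j - 1/(m+1) < σ.t (σ.f j) := by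
      intro m
      have hlt : tstar j - 1/(m+1) < tstar j := by
        have : (0:ℝ) < 1/(m+1) := by positivity
        linarith
      obtain ⟨x, hx, hlt'⟩ := exists_lt_of_lt_csSup (hSne j) hlt
      obtain ⟨σ, hσ, rfl⟩ := hx
      exact ⟨σ, hσ, hlt'⟩
    choose σs hσsC hσst using happrox
    set τ : ℕ → St A I K M := fun m =>
      Nat.rec (σs 0) (fun m ih => if ih ≤ σs (m+1) then σs (m+1) else ih) m with hτ
    have hτC : ∀ m, τ m ∈ C := by
      intro m
      induction m with
      | zero => exact hσsC 0
      | succ m ihm =>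
        by_cases hcs : τ m ≤ σs (m+1)
        · show (if τ m ≤ σs (m+1) then σs (m+1) else τ m) ∈ C
          rw [if_pos hcs]; exact hσsC (m+1)
        · show (if τ m ≤ σs (m+1) then σs (m+1) else τ m) ∈ C
          rw [if_neg hcs]; exact ihm
    have hτsucc : ∀ m, τ m ≤ τ (m+1) := by
      intro m
      by_cases hcs : τ m ≤ σs (m+1)
      · show τ m ≤ (if τ m ≤ σs (m+1) then σs (m+1) else τ m)
        rw [if_pos hcs]; exact hcs
      · show τ m ≤ (if τ m ≤ σs (m+1) then σs (m+1) else τ m)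
        rw [if_neg hcs]
    have hτmono : ∀ {m m'}, m ≤ m' → τ m ≤ τ m' := by
      intro m m' hmm
      induction m' with
      | zero => rw [Nat.le_zero.mp hmm]
      | succ m' ihm =>
        rcases Nat.le_succ_iff.mp hmm with hmm' | hmm'
        · exact (ihm hmm').trans (hτsucc m')
        · rw [hmm']
    have hτge : ∀ m, σs m ≤ τ m := by
      intro m
      cases m with
      | zero => exact le_refl _
      | succ m =>
        by_cases hcs : τ m ≤ σs (m+1)
        · show σs (m+1) ≤ (if τ m ≤ σs (m+1) then σs (m+1) else τ m)
          rw [if_pos hcs]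
        · show σs (m+1) ≤ (if τ m ≤ σs (m+1) then σs (m+1) else τ m)
          rw [if_neg hcs]
          rcases hC.total (hσsC (m+1)) (hτC m) with hle | hle
          · exact hle
          · exact absurd hle hcs
    have htle : ∀ m, (τ m).t ((τ m).f j) ≤ tstar j := fun m => htstar_le j hj (τ m) (hτC m)
    have htge : ∀ m, tstar j - 1/(m+1) < (τ m).t ((τ m).f j) := fun m =>
      lt_of_lt_of_le (hσst m) (le_t_mono (hτge m) hj)
    have hd2 : ∀ n m, n ≤ m →
        dist ((τ n).c ((τ n).f j)) ((τ m).c ((τ m).f j)) ≤ 1/(n+1) := by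
      intro n m hnm
      have h0 := le_dist (hτmono hnm) hj
      have h1 := htle m
      have h2 := htge n
      linarith
    have hcauchy : CauchySeq (fun m => (τ m).c ((τ m).f j)) :=
      cauchySeq_of_le_tendsto_0' (fun n => 1/(n+1)) hd2
        tendsto_one_div_add_atTop_nhds_zero_nat
    obtain ⟨cj, hcj⟩ := cauchySeq_tendsto_of_complete hcauchy
    refine ⟨cj, fun _ => ⟨?_, ?_⟩⟩
    · intro σ hσ x hx
      have hbnd : ∀ m, dist x ((τ m).c ((τ m).f j)) ≤ tstar j + 1/(m+1) := by
        intro m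
        have hpos : (0:ℝ) < 1/(m+1) := by positivity
        rcases hC.total hσ (hτC m) with hle | hle
        · have hxm := mem_closedBall.mp (hle.2 j hj hx)
          have := htle m
          linarith
        · have hda : dist x (σ.c (σ.f j)) ≤ σ.t (σ.f j) := mem_closedBall.mp hx
          have hdb := le_dist hle hj
          have hσle := htstar_le j hj σ hσ
          have h2 := htge m
          calc dist x ((τ m).c ((τ m).f j))
              ≤ dist x (σ.c (σ.f j)) + dist (σ.c (σ.f j)) ((τ m).c ((τ m).f j)) :=
                dist_triangle _ _ _
            _ ≤ tstar j + 1/(m+1) := by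
                rw [dist_comm (σ.c (σ.f j)) ((τ m).c ((τ m).f j))]
                linarith
      have h1 : Filter.Tendsto (fun m => dist x ((τ m).c ((τ m).f j))) Filter.atTop
          (nhds (dist x cj)) := tendsto_const_nhds.dist hcj
      have h2 : Filter.Tendsto (fun m : ℕ => tstar j + 1/((m:ℝ)+1)) Filter.atTop
          (nhds (tstar j)) := by
        simpa using (tendsto_const_nhds (x := tstar j) (f := Filter.atTop (α := ℕ))).add
          tendsto_one_div_add_atTop_nhds_zero_nat
      exact mem_closedBall.mpr (le_of_tendsto_of_tendsto' h1 h2 hbnd)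
    · intro hall
      have hconst : (fun m => (τ m).c ((τ m).f j)) = fun _ => A.a j :=
        funext fun m => (hall (τ m) (hτC m)).1
      rw [hconst] at hcj
      exact tendsto_nhds_unique hcj tendsto_const_nhds
  choose cstar hcstar using key
  have hfib : ∀ jj, {k | k ∈ A.sig ∧ (if k ∈ A.sig then F k else k) = jj} =
      {k | k ∈ A.sig ∧ F k = jj} := by
    intro jj
    ext k
    simp only [mem_setOf_eq]
    constructor
    · rintro ⟨hk, he⟩; rw [if_pos hk] at he; exact ⟨hk, he⟩
    · rintro ⟨hk, he⟩; exact ⟨hk, by rw [if_pos hk]; exact he⟩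
  refine ⟨⟨fun k => if k ∈ A.sig then F k else k, cstar,
    fun jj => if jj ∈ A.sig then tstar jj else A.r jj, ?_, ?_, ?_, ?_, ?_⟩, ?_⟩
  · -- mem
    intro k hk
    rw [if_pos hk]
    exact (hFmem k hk).1
  · -- idem
    intro k hk
    rw [if_pos hk, if_pos (hFmem k hk).1]
    exact hFF k hk
  · -- sub
    intro k hk
    rw [if_pos hk, if_pos (hFmem k hk).1]
    obtain ⟨σ₁, hσ₁, he₁⟩ := (hFmem k hk).2
    refine (σ₁.sub k hk).trans ?_
    rw [he₁]
    exact (hcstar (F k) (hFmem k hk).1).1 σ₁ hσ₁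
  · -- bound
    intro jj hj hrep
    rw [if_pos hj] at hrep
    rw [hfib jj, if_pos hj]
    have hfin : ∑' k : {k | k ∈ A.sig ∧ F k = jj}, uu A k ≠ ⊤ := tsum_uu_ne_top h _
    have hsup : tstar jj ≤ (∑' k : {k | k ∈ A.sig ∧ F k = jj}, uu A k).toReal := by
      refine csSup_le (hSne jj) ?_
      rintro x ⟨σ, hσ, rfl⟩
      have h1 : ENNReal.ofReal (σ.t (σ.f jj)) ≤
          ∑' k : {k | k ∈ A.sig ∧ F k = jj}, uu A k := by
        refine (σ.bound (σ.f jj) (σ.mem jj hj) (σ.idem jj hj)).trans ?_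
        refine ENNReal.tsum_mono_subtype _ (fun k hk => ?_)
        exact ⟨hk.1, by rw [hFcongr k hk.1 jj hj ⟨σ, hσ, hk.2⟩]; exact hrep⟩
      calc σ.t (σ.f jj) = (ENNReal.ofReal (σ.t (σ.f jj))).toReal :=
            (ENNReal.toReal_ofReal (t_nonneg' σ hj)).symm
        _ ≤ _ := ENNReal.toReal_mono hfin h1
    calc ENNReal.ofReal (tstar jj)
        ≤ ENNReal.ofReal ((∑' k : {k | k ∈ A.sig ∧ F k = jj}, uu A k).toReal) :=
          ENNReal.ofReal_le_ofReal hsup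
      _ = _ := ENNReal.ofReal_toReal hfin
  · -- tag
    intro jj hj hrep
    rw [if_pos hj] at hrep
    rw [hfib jj, if_pos hj]
    by_cases hex : ∃ σ₀ ∈ C, ∃ n ∈ I,
        (closedBall (σ₀.c (σ₀.f jj)) (σ₀.t (σ₀.f jj)) ∩ K n).Nonempty ∧
        {k | k ∈ A.sig ∧ σ₀.f k = σ₀.f jj} ⊆ A.HSet (UKM (K n) (M n))
    · obtain ⟨σ₀, hσ₀, n, hn, hmeets, hsubH⟩ := hex
      refine Or.inr ⟨n, hn, ?_, ?_⟩
      · obtain ⟨z, hz1, hz2⟩ := hmeets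
        exact ⟨z, (hcstar jj hj).1 σ₀ hσ₀ hz1, hz2⟩
      · rintro k ⟨hk, hFk⟩
        have heqkj : eqv k jj := by
          have := (hFmem k hk).2
          rw [hFk] at this
          exact this
        obtain ⟨σ₂, hσ₂, he₂⟩ := heqkj
        rcases hC.total hσ₂ hσ₀ with hle | hle
        · exact hsubH ⟨hk, hle.1 k hk jj hj he₂⟩
        · have he₂' : σ₂.f k = σ₂.f jj := he₂
          have hd₀₂ : closedBall (σ₀.c (σ₀.f jj)) (σ₀.t (σ₀.f jj)) ⊆
              closedBall (σ₂.c (σ₂.f jj)) (σ₂.t (σ₂.f jj)) := hle.2 jj hj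
          rcases σ₂.tag (σ₂.f jj) (σ₂.mem jj hj) (σ₂.idem jj hj) with hL | ⟨m, hm, hKm, hHm⟩
          · have hkmem : k ∈ {k | k ∈ A.sig ∧ σ₂.f k = σ₂.f jj} := ⟨hk, he₂'⟩
            have hjmem : jj ∈ {k | k ∈ A.sig ∧ σ₂.f k = σ₂.f jj} := ⟨hj, rfl⟩
            rw [hL.1] at hkmem hjmem
            have hkjj : k = jj := by
              rw [mem_singleton_iff] at hkmem hjmem
              rw [hkmem, ← hjmem]
            rw [hkjj]
            exact hsubH ⟨hj, rfl⟩
          · have hkHm : k ∈ A.HSet (UKM (K m) (M m)) := hHm ⟨hk, he₂'⟩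
            have hmn : m = n := by
              by_contra hmn
              have hUm : closedBall (σ₂.c (σ₂.f jj)) (σ₂.t (σ₂.f jj)) ⊆
                  UKM (K m) (M m) :=
                fib_subset_HSet h σ₂ (σ₂.mem jj hj) (σ₂.idem jj hj) hm ⟨hKm, hHm⟩
              obtain ⟨z, hz1, hz2⟩ := hmeets
              have : z ∈ UKM (K m) (M m) ∩ UKM (K n) (M n) :=
                ⟨hUm (hd₀₂ hz1), KsubU h hn hz2⟩
              rw [h.hadm₂ m hm n hn hmn] at this
              exact this
            rw [← hmn]
            exact hkHm
    · push_neg at hex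
      have hallL : ∀ σ ∈ C, σ.f jj = jj ∧ {k | k ∈ A.sig ∧ σ.f k = jj} = {jj} ∧
          σ.c jj = A.a jj ∧ σ.t jj = A.r jj := by
        intro σ hσ
        rcases σ.tag (σ.f jj) (σ.mem jj hj) (σ.idem jj hj) with hL | ⟨n, hn, hKn, hHn⟩
        · have hjmem : jj ∈ {k | k ∈ A.sig ∧ σ.f k = σ.f jj} := ⟨hj, rfl⟩
          rw [hL.1, mem_singleton_iff] at hjmem
          have hfjj : σ.f jj = jj := hjmem.symm
          refine ⟨hfjj, ?_, ?_, ?_⟩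
          · have := hL.1
            rw [hfjj] at this
            exact this
          · have := hL.2.1
            rw [hfjj] at this
            exact this
          · have := hL.2.2
            rw [hfjj] at this
            exact this
        · exact absurd hHn (hex σ hσ n hn hKn)
      refine Or.inl ⟨?_, ?_, ?_⟩
      · ext k
        simp only [mem_setOf_eq, mem_singleton_iff]
        constructor
        · rintro ⟨hk, hFk⟩
          have heqkj : eqv k jj := by
            have := (hFmem k hk).2
            rw [hFk] at this
            exact this
          obtain ⟨σ₂, hσ₂, he₂⟩ := heqkj
          have hkmem : k ∈ {k | k ∈ A.sig ∧ σ₂.f k = jj} := by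
            refine ⟨hk, ?_⟩
            rw [he₂, (hallL σ₂ hσ₂).1]
          rw [(hallL σ₂ hσ₂).2.1, mem_singleton_iff] at hkmem
          exact hkmem
        · rintro rfl
          exact ⟨hj, hrep⟩
      · refine (hcstar jj hj).2 ?_
        intro σ hσ
        obtain ⟨hfjj, _, hc, ht⟩ := hallL σ hσ
        rw [hfjj]
        exact ⟨hc, ht⟩
      · have himg : (fun σ : St A I K M => σ.t (σ.f jj)) '' C = {A.r jj} := by
          ext x
          simp only [mem_image, mem_singleton_iff]
          constructor
          · rintro ⟨σ, hσ, rfl⟩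
            obtain ⟨hfjj, _, _, ht⟩ := hallL σ hσ
            rw [hfjj, ht]
          · rintro rfl
            obtain ⟨σ, hσ⟩ := hne
            obtain ⟨hfjj, _, _, ht⟩ := hallL σ hσ
            exact ⟨σ, hσ, by rw [hfjj, ht]⟩
        show sSup _ = _
        rw [himg, csSup_singleton]
  · -- every element of the chain is below the constructed state
    intro σ hσ
    constructor
    · intro k hk l hl he
      dsimp only
      rw [if_pos hk, if_pos hl]
      exact hFcongr k hk l hl ⟨σ, hσ, he⟩
    · intro k hk
      dsimp only
      rw [if_pos hk, if_pos (hFmem k hk).1]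
      obtain ⟨σ₁, hσ₁, he₁⟩ := (hFmem k hk).2
      rcases hC.total hσ hσ₁ with hle | hle
      · refine (hle.2 k hk).trans ?_
        rw [he₁]
        exact (hcstar (F k) (hFmem k hk).1).1 σ₁ hσ₁
      · have heq : σ.f k = σ.f (F k) := hle.1 k hk (F k) (hFmem k hk).1 he₁
        rw [heq]
        exact (hcstar (F k) (hFmem k hk).1).1 σ hσ

-- ================= maximal states and the final cheese =================

lemma exists_max (h : Hyp A I K M) : ∃ σ : St A I K M, IsMax σ := by
  apply zorn_le
  intro C hch
  rcases C.eq_empty_or_nonempty with rfl | hne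
  · exact bddAbove_empty
  · obtain ⟨ub, hub⟩ := chain_bound h C hch hne
    exact ⟨ub, fun σ hσ => hub σ hσ⟩

lemma max_disjoint (h : Hyp A I K M) {σ : St A I K M} (hmax : IsMax σ) {j j' : ℕ}
    (hj : j ∈ A.sig) (hj' : j' ∈ A.sig) (hrj : σ.f j = j) (hrj' : σ.f j' = j')
    (hjj : j ≠ j') :
    closedBall (σ.c j) (σ.t j) ∩ closedBall (σ.c j') (σ.t j') = ∅ := by
  by_contra hcon
  obtain ⟨τ, hle, hnle⟩ := merge h σ hj hj' hrj hrj' hjj (nonempty_iff_ne_empty.mpr hcon)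
  exact hnle (hmax hle)

/-- The classical Swiss cheese obtained from a state. -/
def toCheese (σ : St A I K M) : SwissCheese where
  a := fun k => if k = 0 then A.a 0 else σ.c k
  r := fun k => if k = 0 then A.r 0 else if k ∈ A.sig ∧ σ.f k = k then σ.t k else 0
  r_nonneg := fun k => by
    by_cases h0 : k = 0
    · rw [if_pos h0]; exact A.r_nonneg 0
    · rw [if_neg h0]
      by_cases hk : k ∈ A.sig ∧ σ.f k = k
      · rw [if_pos hk]; exact t_nonneg'' σ hk.1 hk.2
      · rw [if_neg hk]

lemma toCheese_a0 (σ : St A I K M) : (toCheese σ).a 0 = A.a 0 := rfl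

lemma toCheese_r0 (σ : St A I K M) : (toCheese σ).r 0 = A.r 0 := rfl

lemma toCheese_r_def (σ : St A I K M) (k : ℕ) : (toCheese σ).r k =
    if k = 0 then A.r 0 else if k ∈ A.sig ∧ σ.f k = k then σ.t k else 0 := rfl

lemma sig_ne_zero {k : ℕ} (hk : k ∈ A.sig) : k ≠ 0 := by
  have : 1 ≤ k := hk.1
  omega

lemma toCheese_a_rep (σ : St A I K M) {j : ℕ} (hj : j ∈ A.sig) :
    (toCheese σ).a j = σ.c j := if_neg (sig_ne_zero hj)

lemma toCheese_r_rep (σ : St A I K M) {j : ℕ} (hj : j ∈ A.sig) (hr : σ.f j = j) :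
    (toCheese σ).r j = σ.t j := by
  rw [toCheese_r_def σ j, if_neg (sig_ne_zero hj), if_pos ⟨hj, hr⟩]

lemma toCheese_sig (σ : St A I K M) :
    (toCheese σ).sig = {j | j ∈ A.sig ∧ σ.f j = j} := by
  ext j
  simp only [SwissCheese.sig, mem_setOf_eq]
  constructor
  · rintro ⟨hj1, hj2⟩
    by_contra hcon
    have hj0 : j ≠ 0 := by omega
    have hcon' : ¬(j ∈ A.sig ∧ σ.f j = j) := hcon
    have : (toCheese σ).r j = 0 := by
      rw [toCheese_r_def σ j, if_neg hj0, if_neg hcon']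
    rw [this] at hj2
    exact lt_irrefl 0 hj2
  · rintro ⟨hj, hr⟩
    refine ⟨hj.1, ?_⟩
    rw [toCheese_r_rep σ hj hr]
    calc (0:ℝ) < A.r j := hj.2
      _ ≤ σ.t j := by have := t_nonneg σ hj; rwa [hr] at this

lemma radSum_ennreal (h : Hyp A I K M) (σ : St A I K M) :
    ∑' nn : ℕ, ENNReal.ofReal ((toCheese σ).r (nn+1)) ≤ ENNReal.ofReal A.radSum := by
  classical
  set B := toCheese σ with hB
  set R : Set ℕ := {j | j ∈ A.sig ∧ σ.f j = j} with hR
  set g : ℕ → ℝ≥0∞ := fun k => if k = 0 then 0 else ENNReal.ofReal (B.r k) with hg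
  set g' : ℕ → ℝ≥0∞ := fun k => if k = 0 then 0 else uu A k with hg'
  have step1 : ∑' nn : ℕ, ENNReal.ofReal (B.r (nn+1)) = ∑' k, g k := by
    have h1 : ∑' k, g k = g 0 + ∑' nn, g (nn + 1) := tsum_eq_zero_add' ENNReal.summable
    have h2 : g 0 = 0 := if_pos rfl
    rw [h1, h2, zero_add]
    exact tsum_congr fun nn => (if_neg (Nat.succ_ne_zero nn)).symm
  have step2 : ∑' k, g k = ∑' j : R, ENNReal.ofReal (σ.t j) := by
    have hsupp : Function.support g ⊆ R := by
      intro k hk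
      simp only [Function.mem_support, hg] at hk
      by_cases h0 : k = 0
      · rw [if_pos h0] at hk; exact absurd rfl hk
      rw [if_neg h0] at hk
      by_cases hkR : k ∈ A.sig ∧ σ.f k = k
      · exact hkR
      · exfalso
        apply hk
        have : B.r k = 0 := by
          rw [hB, toCheese_r_def σ k, if_neg h0, if_neg hkR]
        rw [this]
        exact ENNReal.ofReal_zero
    rw [← tsum_subtype_eq_of_support_subset hsupp]
    refine tsum_congr fun j => ?_
    have hj := j.2
    rw [hg]
    simp only
    rw [if_neg (sig_ne_zero hj.1), toCheese_r_rep σ hj.1 hj.2]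
  have step3 : ∑' j : R, ENNReal.ofReal (σ.t j) ≤ ∑' k : A.sig, uu A k :=
    sumFib h σ R A.sig (fun j hj => hj) (fun j _ k hks _ => hks)
  have step4 : ∑' k : A.sig, uu A k = ∑' k, g' k := by
    have hsupp : Function.support g' ⊆ A.sig := by
      intro k hk
      simp only [Function.mem_support, hg'] at hk
      by_cases h0 : k = 0
      · rw [if_pos h0] at hk; exact absurd rfl hk
      rw [if_neg h0] at hk
      have hpos : 0 < A.r k := by
        by_contra hcon
        push_neg at hcon
        apply hk
        have : A.r k = 0 := le_antisymm hcon (A.r_nonneg k)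
        rw [uu, this, ENNReal.ofReal_zero]
      exact ⟨by omega, hpos⟩
    rw [← tsum_subtype_eq_of_support_subset hsupp]
    refine tsum_congr fun k => ?_
    rw [hg']
    simp only
    rw [if_neg (sig_ne_zero k.2)]
  have step5 : ∑' k, g' k = ENNReal.ofReal A.radSum := by
    have h1 : ∑' k, g' k = g' 0 + ∑' nn, g' (nn + 1) := tsum_eq_zero_add' ENNReal.summable
    have h2 : g' 0 = 0 := if_pos rfl
    rw [h1, h2, zero_add]
    have h3 : ∀ nn : ℕ, g' (nn + 1) = ENNReal.ofReal (A.r (nn + 1)) := fun nn =>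
      if_neg (Nat.succ_ne_zero nn)
    rw [tsum_congr h3]
    exact (ENNReal.ofReal_tsum_of_nonneg (fun nn => A.r_nonneg _) h.hsum).symm
  calc ∑' nn : ℕ, ENNReal.ofReal (B.r (nn+1)) = ∑' k, g k := step1
    _ = ∑' j : R, ENNReal.ofReal (σ.t j) := step2
    _ ≤ ∑' k : A.sig, uu A k := step3
    _ = ∑' k, g' k := step4
    _ = ENNReal.ofReal A.radSum := step5

lemma radSummable_B (h : Hyp A I K M) (σ : St A I K M) : (toCheese σ).RadSummable := by
  have hlt : ∑' nn : ℕ, ENNReal.ofReal ((toCheese σ).r (nn+1)) ≠ ⊤ :=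
    ne_top_of_le_ne_top ENNReal.ofReal_ne_top (radSum_ennreal h σ)
  have := ENNReal.summable_toReal hlt
  refine this.congr fun nn => ?_
  exact ENNReal.toReal_ofReal ((toCheese σ).r_nonneg (nn+1))

lemma radSum_le (h : Hyp A I K M) (σ : St A I K M) : (toCheese σ).radSum ≤ A.radSum := by
  have h1 : ENNReal.ofReal ((toCheese σ).radSum) =
      ∑' nn : ℕ, ENNReal.ofReal ((toCheese σ).r (nn+1)) :=
    ENNReal.ofReal_tsum_of_nonneg (fun nn => (toCheese σ).r_nonneg _) (radSummable_B h σ)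
  have h2 := (h1.trans_le (radSum_ennreal h σ))
  have hnn : 0 ≤ A.radSum := tsum_nonneg fun nn => A.r_nonneg _
  exact (ENNReal.ofReal_le_ofReal_iff hnn).mp h2

lemma disk_sub_ball (h : Hyp A I K M) (σ : St A I K M) {j : ℕ} (hj : j ∈ A.sig)
    (hr : σ.f j = j) : closedBall (σ.c j) (σ.t j) ⊆ ball (A.a 0) (A.r 0) := by
  rcases σ.tag j hj hr with hL | ⟨n, hn, hKn, hHn⟩
  · rw [hL.2.1, hL.2.2]
    exact holeSubBall h hj
  · exact (fib_subset_HSet h σ hj hr hn ⟨hKn, hHn⟩).trans (UsubBall h hn)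

lemma cheese_classical (h : Hyp A I K M) {σ : St A I K M} (hmax : IsMax σ) :
    (toCheese σ).IsClassical := by
  refine ⟨radSummable_B h σ, ?_, ?_⟩
  · rw [toCheese_r0]
    obtain ⟨n₀, hn₀⟩ := h.hI
    obtain ⟨z, hz⟩ := h.hKne n₀ hn₀
    have : z ∈ ball (A.a 0) (A.r 0) := UsubBall h hn₀ (KsubU h hn₀ hz)
    exact Metric.nonempty_ball.mp ⟨z, this⟩
  · intro k hk
    rw [toCheese_sig σ] at hk
    rw [toCheese_a_rep σ hk.1, toCheese_r_rep σ hk.1 hk.2, toCheese_r0, toCheese_a0]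
    refine ⟨disk_sub_ball h σ hk.1 hk.2, ?_⟩
    intro l hl hlk
    rw [toCheese_sig σ] at hl
    rw [toCheese_a_rep σ hl.1, toCheese_r_rep σ hl.1 hl.2]
    exact max_disjoint h hmax hk.1 hl.1 hk.2 hl.2 (fun he => hlk he.symm)

lemma cheese_subset (h : Hyp A I K M) (σ : St A I K M) :
    (toCheese σ).cheeseSet ⊆ A.cheeseSet := by
  intro x hx
  obtain ⟨hx1, hx2⟩ := hx
  rw [toCheese_a0, toCheese_r0] at hx1
  refine ⟨hx1, ?_⟩
  intro hmem
  obtain ⟨n, hn1, hxball⟩ := by simpa using hmem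
  have hrpos : 0 < A.r n := Metric.nonempty_ball.mp ⟨x, hxball⟩
  have hns : n ∈ A.sig := ⟨hn1, hrpos⟩
  set j := σ.f n with hj
  have hjs : j ∈ A.sig := σ.mem n hns
  have hjr : σ.f j = j := σ.idem n hns
  have hsub : ball (A.a n) (A.r n) ⊆ ball (σ.c j) (σ.t j) :=
    ballSubBall hrpos (σ.sub n hns)
  apply hx2
  simp only [mem_iUnion]
  refine ⟨j, hjs.1, ?_⟩
  rw [toCheese_a_rep σ hjs, toCheese_r_rep σ hjs hjr]
  exact hsub hxball

lemma untouched (h : Hyp A I K M) (σ : St A I K M) {k : ℕ} (hk : k ∈ A.sig)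
    (hnk : k ∉ ⋃ n ∈ I, A.HSet (UKM (K n) (M n))) :
    ∃ l ∈ (toCheese σ).sig,
      ball ((toCheese σ).a l) ((toCheese σ).r l) = ball (A.a k) (A.r k) := by
  have hjs : σ.f k ∈ A.sig := σ.mem k hk
  have hjr : σ.f (σ.f k) = σ.f k := σ.idem k hk
  rcases σ.tag (σ.f k) hjs hjr with hL | ⟨n, hn, _, hHn⟩
  · have hkmem : k ∈ {l | l ∈ A.sig ∧ σ.f l = σ.f k} := ⟨hk, rfl⟩
    rw [hL.1, mem_singleton_iff] at hkmem
    -- k = σ.f k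
    have hrk : σ.f k = k := hkmem.symm
    refine ⟨k, ?_, ?_⟩
    · rw [toCheese_sig σ]; exact ⟨hk, hrk⟩
    · rw [toCheese_a_rep σ hk, toCheese_r_rep σ hk hrk]
      have hc := hL.2.1
      have ht := hL.2.2
      rw [hrk] at hc ht
      rw [hc, ht]
  · exfalso
    apply hnk
    simp only [mem_iUnion]
    exact ⟨n, hn, hHn ⟨hk, rfl⟩⟩

lemma rhoU_le_final (h : Hyp A I K M) (σ : St A I K M) {n : ℕ} (hn : n ∈ I) :
    (toCheese σ).rhoU (UKM (K n) (M n)) ≤ A.rhoU (UKM (K n) (M n)) := by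
  classical
  set B := toCheese σ with hB
  set U := UKM (K n) (M n) with hU
  have hBH : ∀ j ∈ B.HSet U, j ∈ A.sig ∧ σ.f j = j := by
    intro j hj
    have := hj.1
    rw [hB, toCheese_sig σ] at this
    exact this
  have hfibH : ∀ j ∈ B.HSet U, ∀ k, k ∈ A.sig → σ.f k = j → k ∈ A.HSet U := by
    intro j hj k hks hfk
    obtain ⟨hjs, hjr⟩ := hBH j hj
    have hmeet : (closedBall (σ.c j) (σ.t j) ∩ U).Nonempty := by
      have := hj.2
      rwa [hB, toCheese_a_rep σ hjs, toCheese_r_rep σ hjs hjr] at this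
    rcases σ.tag j hjs hjr with hL | ⟨m, hm, hKm, hHm⟩
    · have hkmem : k ∈ {l | l ∈ A.sig ∧ σ.f l = j} := ⟨hks, hfk⟩
      rw [hL.1, mem_singleton_iff] at hkmem
      subst hkmem
      refine ⟨hks, ?_⟩
      rwa [hL.2.1, hL.2.2] at hmeet
    · have hdisk : closedBall (σ.c j) (σ.t j) ⊆ UKM (K m) (M m) :=
        fib_subset_HSet h σ hjs hjr hm ⟨hKm, hHm⟩
      have hmn : m = n := by
        by_contra hmn
        obtain ⟨z, hz1, hz2⟩ := hmeet
        have : z ∈ UKM (K m) (M m) ∩ UKM (K n) (M n) := ⟨hdisk hz1, hz2⟩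
        rw [h.hadm₂ m hm n hn hmn] at this
        exact this
      subst hmn
      exact hHm ⟨hks, hfk⟩
  have henn : ∑' j : B.HSet U, ENNReal.ofReal (B.r j) ≤
      ENNReal.ofReal (A.rhoU U) := by
    have hcongr : ∑' j : B.HSet U, ENNReal.ofReal (B.r j) =
        ∑' j : B.HSet U, ENNReal.ofReal (σ.t j) := by
      refine tsum_congr fun j => ?_
      obtain ⟨hjs, hjr⟩ := hBH j j.2
      exact congrArg ENNReal.ofReal (toCheese_r_rep σ hjs hjr)
    rw [hcongr, rho_ofReal h U]
    exact sumFib h σ (B.HSet U) (A.HSet U) hBH hfibH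
  have hsummB : Summable B.r := by
    have := radSummable_B h σ
    exact (summable_nat_add_iff 1).mp this
  have h1 : ENNReal.ofReal (B.rhoU U) = ∑' j : B.HSet U, ENNReal.ofReal (B.r j) :=
    ENNReal.ofReal_tsum_of_nonneg (fun j => B.r_nonneg j) (hsummB.subtype _)
  have h2 := h1.trans_le henn
  exact (ENNReal.ofReal_le_ofReal_iff (rhoU_nonneg h U)).mp h2

end CCaux
end CCaux

/-- Controlled classicalisation theorem. -/
theorem stmt_11 (A : SwissCheese) (hrf : A.IsRedundancyFree) (hsum : A.RadSummable)
    (I : Set ℕ) (hI : I.Nonempty) (K : ℕ → Set ℂ) (M : ℕ → ℝ)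
    (hKne : ∀ n ∈ I, (K n).Nonempty) (hKc : ∀ n ∈ I, IsCompact (K n))
    (hM : ∀ n ∈ I, 0 < M n)
    (hadm₁ : ∀ n ∈ I, A.rhoU (UKM (K n) (M n)) < M n / 2)
    (hadm₂ : ∀ m ∈ I, ∀ n ∈ I, m ≠ n → UKM (K m) (M m) ∩ UKM (K n) (M n) = ∅)
    (hadm₃ : ∀ n ∈ I, closure (UKM (K n) (M n)) ⊆ Metric.ball (A.a 0) (A.r 0))
    (hcover : A.errorSet ⊆ ⋃ n ∈ I, K n) :
    ∃ B : SwissCheese, B.IsClassical ∧ A.disc ≤ B.disc ∧ B.cheeseSet ⊆ A.cheeseSet ∧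
      (∀ k ∈ A.sig, k ∉ (⋃ n ∈ I, A.HSet (UKM (K n) (M n))) →
        ∃ l ∈ B.sig, Metric.ball (B.a l) (B.r l) = Metric.ball (A.a k) (A.r k)) ∧
      ∀ n ∈ I, B.rhoU (UKM (K n) (M n)) ≤ A.rhoU (UKM (K n) (M n)) := by
  classical
  have h : CCaux.Hyp A I K M :=
    ⟨hsum, hI, hKne, hM, hadm₁, hadm₂, hadm₃, hcover⟩
  obtain ⟨σ, hmax⟩ := CCaux.exists_max h
  refine ⟨CCaux.toCheese σ, CCaux.cheese_classical h hmax, ?_,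
    CCaux.cheese_subset h σ, ?_, ?_⟩
  · have h1 : (CCaux.toCheese σ).r 0 = A.r 0 := CCaux.toCheese_r0 σ
    have h2 := CCaux.radSum_le h σ
    simp only [SwissCheese.disc, h1]
    linarith
  · intro k hk hnk
    exact CCaux.untouched h σ hk hnk
  · intro n hn
    exact CCaux.rhoU_le_final h σ hn
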